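/- Let 3 ≤ d₁ ≤ d₂. Represent vectors in ℂ^{d₁} ⊗ ℂ^{d₂} as d₁×d₂ complex matrices, with the first-party action (E ⊗ I) sending Φ to EΦ for E a d₁×d₁ matrix. Let S be the set consisting of the matrices of |00⟩ − |12⟩, of |i0⟩ − |0i⟩ for 1 ≤ i ≤ d₁−1, of |0j⟩ − |2,(j−1)⟩ for d₁ ≤ j ≤ d₂−1, and the all-ones d₁×d₂ matrix. If a d₁×d₁ complex matrix E satisfies tr(Ψᴴ E Φ) = 0 for all distinct Ψ, Φ ∈ S, then E = c·I for some c ∈ ℂ. -/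

import Mathlib

open Matrix

/-- Coefficient matrix of the basis vector `|i⟩⊗|j⟩` in `ℂ^{d₁} ⊗ ℂ^{d₂}`. -/
noncomputable def ket (d₁ d₂ : ℕ) (i j : ℕ) : Matrix (Fin d₁) (Fin d₂) ℂ :=
  fun a b => if (a : ℕ) = i ∧ (b : ℕ) = j then 1 else 0

/-- The `d₂+1` states of Theorem 2 in `ℂ^{d₁} ⊗ ℂ^{d₂}` (Eq. (5)): index `0` is
`|00⟩ − |12⟩`; index `i` with `1 ≤ i ≤ d₁−1` is `|i0⟩ − |0i⟩`; index `j` with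
`d₁ ≤ j ≤ d₂−1` is `|0j⟩ − |2,(j−1)⟩`; index `d₂` is the stopper (all-ones). -/
noncomputable def stateD12 (d₁ d₂ : ℕ) (i : ℕ) : Matrix (Fin d₁) (Fin d₂) ℂ :=
  if i = 0 then ket d₁ d₂ 0 0 - ket d₁ d₂ 1 2
  else if i < d₁ then ket d₁ d₂ i 0 - ket d₁ d₂ 0 i
  else if i < d₂ then ket d₁ d₂ 0 i - ket d₁ d₂ 2 (i - 1)
  else fun _ _ => 1

lemma ket_eq_std (d₁ d₂ : ℕ) (a : Fin d₁) (b : Fin d₂) :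
    ket d₁ d₂ a b = Matrix.single a b 1 := by
  funext x y
  simp [ket, Matrix.single, Fin.ext_iff, eq_comm]

lemma tkk (d₁ d₂ : ℕ) (E : Matrix (Fin d₁) (Fin d₁) ℂ) (a c b f : ℕ)
    (ha : a < d₁) (hc : c < d₁) (hb : b < d₂) (hf : f < d₂) :
    Matrix.trace ((ket d₁ d₂ a b)ᴴ * (E * ket d₁ d₂ c f)) =
      if b = f then E ⟨a, ha⟩ ⟨c, hc⟩ else 0 := by
  rw [ket_eq_std d₁ d₂ ⟨a,ha⟩ ⟨b,hb⟩, ket_eq_std d₁ d₂ ⟨c,hc⟩ ⟨f,hf⟩]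
  simp [Matrix.trace, Matrix.diag, Matrix.mul_apply, Matrix.single, conjTranspose_apply,
    apply_ite, Fin.ext_iff]
  have e1 : ∀ x : Fin d₁, (a = (x:ℕ)) ↔ ((⟨a,ha⟩:Fin d₁) = x) := fun x => by simp [Fin.ext_iff]
  have e2 : ∀ x : Fin d₁, (c = (x:ℕ)) ↔ ((⟨c,hc⟩:Fin d₁) = x) := fun x => by simp [Fin.ext_iff]
  have e3 : ∀ x : Fin d₂, (b = (x:ℕ)) ↔ ((⟨b,hb⟩:Fin d₂) = x) := fun x => by simp [Fin.ext_iff]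
  have e4 : ∀ x : Fin d₂, (f = (x:ℕ)) ↔ ((⟨f,hf⟩:Fin d₂) = x) := fun x => by simp [Fin.ext_iff]
  simp only [e1, e2, e3, e4, ite_and, Finset.sum_ite_eq, Finset.mem_univ, if_true]
  split_ifs <;> simp_all [Fin.mk.injEq]

lemma tsub (d₁ d₂ : ℕ) (E : Matrix (Fin d₁) (Fin d₁) ℂ) (a b a' b' c f c' f' : ℕ)
    (ha : a < d₁) (hb : b < d₂) (ha' : a' < d₁) (hb' : b' < d₂)
    (hc : c < d₁) (hf : f < d₂) (hc' : c' < d₁) (hf' : f' < d₂) :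
    Matrix.trace ((ket d₁ d₂ a b - ket d₁ d₂ a' b')ᴴ *
        (E * (ket d₁ d₂ c f - ket d₁ d₂ c' f'))) =
      (if b = f then E ⟨a,ha⟩ ⟨c,hc⟩ else 0) - (if b = f' then E ⟨a,ha⟩ ⟨c',hc'⟩ else 0)
      - (if b' = f then E ⟨a',ha'⟩ ⟨c,hc⟩ else 0)
      + (if b' = f' then E ⟨a',ha'⟩ ⟨c',hc'⟩ else 0) := by
  simp only [conjTranspose_sub, Matrix.mul_sub, Matrix.sub_mul, trace_sub,
    tkk d₁ d₂ E a c b f ha hc hb hf, tkk d₁ d₂ E a c' b f' ha hc' hb hf',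
    tkk d₁ d₂ E a' c b' f ha' hc hb' hf, tkk d₁ d₂ E a' c' b' f' ha' hc' hb' hf']
  ring

lemma tJk (d₁ d₂ : ℕ) (E : Matrix (Fin d₁) (Fin d₁) ℂ) (c f : ℕ)
    (hc : c < d₁) (hf : f < d₂) :
    Matrix.trace ((fun _ _ => (1:ℂ) : Matrix (Fin d₁) (Fin d₂) ℂ)ᴴ * (E * ket d₁ d₂ c f)) =
      ∑ x, E x ⟨c, hc⟩ := by
  rw [ket_eq_std d₁ d₂ ⟨c,hc⟩ ⟨f,hf⟩]
  simp [Matrix.trace, Matrix.diag, Matrix.mul_apply, Matrix.single, conjTranspose_apply,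
    apply_ite, ite_and]
  refine Finset.sum_congr rfl (fun x _ => ?_)
  have hx : (fun _ _ => (1:ℂ) : Matrix (Fin d₁) (Fin d₂) ℂ)ᴴ ⟨f, hf⟩ x = 1 := by
    show star (1:ℂ) = 1; exact star_one ℂ
  rw [hx, one_mul]
lemma stateD12_zero (d₁ d₂ : ℕ) :
    stateD12 d₁ d₂ 0 = ket d₁ d₂ 0 0 - ket d₁ d₂ 1 2 := by simp [stateD12]

lemma stateD12_mid (d₁ d₂ i : ℕ) (h0 : i ≠ 0) (h : i < d₁) :
    stateD12 d₁ d₂ i = ket d₁ d₂ i 0 - ket d₁ d₂ 0 i := by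
  unfold stateD12; rw [if_neg h0, if_pos h]

lemma stateD12_top (d₁ d₂ : ℕ) (h1 : 3 ≤ d₁) (h2 : d₁ ≤ d₂) :
    stateD12 d₁ d₂ d₂ = fun _ _ => 1 := by
  unfold stateD12; rw [if_neg (by omega), if_neg (by omega)]; exact if_neg (by omega)

theorem alice_trivial_d12 (d₁ d₂ : ℕ) (h1 : 3 ≤ d₁) (h2 : d₁ ≤ d₂)
    (E : Matrix (Fin d₁) (Fin d₁) ℂ)
    (hE : ∀ i j : ℕ, i ≤ d₂ → j ≤ d₂ → i ≠ j →
      Matrix.trace ((stateD12 d₁ d₂ i)ᴴ * (E * stateD12 d₁ d₂ j)) = 0) :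
    ∃ c : ℂ, E = c • (1 : Matrix (Fin d₁) (Fin d₁) ℂ) := by
  have h0d : (0:ℕ) < d₁ := by omega
  have h1d : (1:ℕ) < d₁ := by omega
  have h2d : (2:ℕ) < d₁ := by omega
  have h0d2 : (0:ℕ) < d₂ := by omega
  have h1d2 : (1:ℕ) < d₂ := by omega
  have h2d2 : (2:ℕ) < d₂ := by omega
  -- E_{10} = 0
  have hE10 : E ⟨1, h1d⟩ ⟨0, h0d⟩ = 0 := by
    have h := hE 1 0 (by omega) (by omega) (by omega)
    rw [stateD12_mid d₁ d₂ 1 (by omega) h1d, stateD12_zero,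
      tsub d₁ d₂ E 1 0 0 1 0 0 1 2 h1d h0d2 h0d h1d2 h0d h0d2 h1d h2d2] at h
    simpa using h
  -- E_{01} = 0
  have hE01 : E ⟨0, h0d⟩ ⟨1, h1d⟩ = 0 := by
    have h := hE 0 1 (by omega) (by omega) (by omega)
    rw [stateD12_zero, stateD12_mid d₁ d₂ 1 (by omega) h1d,
      tsub d₁ d₂ E 0 0 1 2 1 0 0 1 h0d h0d2 h1d h2d2 h1d h0d2 h0d h1d2] at h
    simpa using h
  -- row 0: E_{0i} = 0 for 1 ≤ i < d₁
  have hrow0 : ∀ i : ℕ, 1 ≤ i → ∀ hi : i < d₁, E ⟨0, h0d⟩ ⟨i, hi⟩ = 0 := by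
    intro i hi1 hi
    have hid2 : i < d₂ := by omega
    have h := hE 0 i (by omega) (by omega) (by omega)
    rw [stateD12_zero, stateD12_mid d₁ d₂ i (by omega) hi,
      tsub d₁ d₂ E 0 0 1 2 i 0 0 i h0d h0d2 h1d h2d2 hi h0d2 h0d hid2] at h
    rcases eq_or_ne i 2 with rfl | hne
    · simpa [hE10] using h
    · simpa [hne, Ne.symm hne, show (0:ℕ) ≠ i by omega] using h
  -- col 0: E_{i0} = 0 for 1 ≤ i < d₁
  have hcol0 : ∀ i : ℕ, 1 ≤ i → ∀ hi : i < d₁, E ⟨i, hi⟩ ⟨0, h0d⟩ = 0 := by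
    intro i hi1 hi
    have hid2 : i < d₂ := by omega
    have h := hE i 0 (by omega) (by omega) (by omega)
    rw [stateD12_mid d₁ d₂ i (by omega) hi, stateD12_zero,
      tsub d₁ d₂ E i 0 0 i 0 0 1 2 hi h0d2 h0d hid2 h0d h0d2 h1d h2d2] at h
    rcases eq_or_ne i 2 with rfl | hne
    · simpa [hE01] using h
    · simpa [hne, show i ≠ 0 by omega] using h
  -- interior off-diagonal
  have hint : ∀ i k : ℕ, 1 ≤ i → 1 ≤ k → i ≠ k →
      ∀ (hi : i < d₁) (hk : k < d₁), E ⟨i, hi⟩ ⟨k, hk⟩ = 0 := by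
    intro i k hi1 hk1 hik hi hk
    have hid2 : i < d₂ := by omega
    have hkd2 : k < d₂ := by omega
    have h := hE i k (by omega) (by omega) hik
    rw [stateD12_mid d₁ d₂ i (by omega) hi, stateD12_mid d₁ d₂ k (by omega) hk,
      tsub d₁ d₂ E i 0 0 i k 0 0 k hi h0d2 h0d hid2 hk h0d2 h0d hkd2] at h
    simpa [hik, show (0:ℕ) ≠ k by omega, show i ≠ 0 by omega] using h
  have hoff : ∀ a c : Fin d₁, a ≠ c → E a c = 0 := by
    intro a c hac
    have hac' : (a:ℕ) ≠ (c:ℕ) := fun h => hac (Fin.ext h)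
    rcases eq_or_ne (a:ℕ) 0 with ha0 | ha0
    · have := hrow0 c (by omega) c.isLt
      rw [Fin.eta] at this
      rw [show a = ⟨0, h0d⟩ from Fin.ext ha0]
      exact this
    · rcases eq_or_ne (c:ℕ) 0 with hc0 | hc0
      · have := hcol0 a (by omega) a.isLt
        rw [Fin.eta] at this
        rw [show c = ⟨0, h0d⟩ from Fin.ext hc0]
        exact this
      · have := hint a c (by omega) (by omega) hac' a.isLt c.isLt
        rwa [Fin.eta, Fin.eta] at this
  -- column sums
  have hsum : ∀ c : Fin d₁, (∑ x, E x c) = E c c := by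
    intro c
    rw [Finset.sum_eq_single c (fun x _ hx => hoff x c hx) (by simp)]
  -- equal column sums
  have hcolsum : ∀ i : ℕ, ∀ hi : i < d₁, (∑ x, E x ⟨i, hi⟩) = ∑ x, E x ⟨0, h0d⟩ := by
    intro i hi
    rcases eq_or_ne i 0 with rfl | hi0
    · rfl
    · have h := hE d₂ i (by omega) (by omega) (by omega)
      rw [stateD12_top d₁ d₂ h1 h2, stateD12_mid d₁ d₂ i hi0 hi] at h
      simp only [Matrix.mul_sub, Matrix.trace_sub] at h
      rw [tJk d₁ d₂ E i 0 hi h0d2, tJk d₁ d₂ E 0 i h0d (by omega),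
        sub_eq_zero] at h
      exact h
  have hdiag : ∀ a : Fin d₁, E a a = E ⟨0, h0d⟩ ⟨0, h0d⟩ := by
    intro a
    have := hcolsum a a.isLt
    rw [hsum, hsum, Fin.eta] at this
    exact this
  refine ⟨E ⟨0, h0d⟩ ⟨0, h0d⟩, ?_⟩
  funext a b
  rcases eq_or_ne a b with rfl | hab
  · simp [Matrix.one_apply, hdiag a]
  · simp [Matrix.one_apply, hab, hoff a b hab]
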